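/- Let n ≥ 3. For all i, k ∈ {1,…,n}: ∫_{S^{n−1}} Σ_{a,b} (𝕃G_{(k)})_{ab}(ω) ω^b (e_{(i)})^a dA(ω) = 2 δ_{ik}. -/

import Mathlib

open MeasureTheory Finset
open scoped ENNReal

noncomputable section

abbrev Euc (n : ℕ) : Type := EuclideanSpace ℝ (Fin n)

variable {n : ℕ}

/-- Partial derivative in coordinate direction `i`. -/
def pd (i : Fin n) (f : Euc n → ℝ) : Euc n → ℝ :=
  fun x => fderiv ℝ f x (EuclideanSpace.single i 1)

/-- Iterated partial derivative along a list of coordinate directions. -/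
def pdList : List (Fin n) → (Euc n → ℝ) → Euc n → ℝ
  | [], f => f
  | i :: L, f => pd i (pdList L f)

/-- The canonical list of coordinate directions associated to a multi-index. -/
def mlist (α : Fin n → ℕ) : List (Fin n) :=
  ((List.finRange n).map fun i => List.replicate (α i) i).flatten

/-- Multi-index partial derivative `∂_α`. -/
def mderiv (α : Fin n → ℕ) (f : Euc n → ℝ) : Euc n → ℝ :=
  pdList (mlist α) f

/-- The Euclidean Laplacian. -/
def lap (f : Euc n → ℝ) : Euc n → ℝ :=
  fun x => ∑ i, pd i (pd i f) x

/-- The Euclidean conformal Killing operator `(𝕃 W)_{a b}`. -/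
def cko (W : Euc n → Euc n) (a b : Fin n) : Euc n → ℝ :=
  fun x => pd a (fun y => W y b) x + pd b (fun y => W y a) x
    - (if a = b then 2 / (n : ℝ) else 0) * ∑ c, pd c (fun y => W y c) x

/-- The Euclidean vector Laplacian `(P̄ W)_a = ½ Σ_b ∂_b (𝕃W)_{a b}`. -/
def vecLap (W : Euc n → Euc n) : Euc n → Euc n :=
  fun x => (EuclideanSpace.equiv (Fin n) ℝ).symm fun a => (1 / 2) * ∑ b, pd b (cko W a b) x

/-- `f` is positively homogeneous of degree `d`: `f (t • x) = t ^ d • f x` for `t > 0`, `x ≠ 0`. -/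
def PosHomog {F : Type*} [SMul ℝ F] (d : ℝ) (f : Euc n → F) : Prop :=
  ∀ t : ℝ, 0 < t → ∀ x : Euc n, x ≠ 0 → f (t • x) = t ^ d • f x

/-- The surface measure on the unit sphere `S^{n-1} ⊆ ℝ^n`
((n-1)-dimensional Hausdorff measure restricted to the sphere). -/
def sphMeas (n : ℕ) : Measure (Euc n) :=
  (μH[(n : ℝ) - 1]).restrict (Metric.sphere (0 : Euc n) 1)

/-- `|S^{n-1}|`, the total surface measure of the unit sphere. -/
def sphVol (n : ℕ) : ℝ := (sphMeas n Set.univ).toReal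

/-- The constant `C_n = 1 / (4 (n-1) (n-2) |S^{n-1}|)`. -/
def Cconst (n : ℕ) : ℝ := 1 / (4 * ((n : ℝ) - 1) * ((n : ℝ) - 2) * sphVol n)

/-- The Green's function `G^{ab}` of the Euclidean vector Laplacian. -/
def GreenFn (n : ℕ) (a b : Fin n) (x : Euc n) : ℝ :=
  -2 * Cconst n * ‖x‖ ^ ((2 : ℝ) - n) *
    ((3 * (n : ℝ) - 2) * (if a = b then 1 else 0)
      + ((n : ℝ) - 2) ^ 2 * (x a / ‖x‖) * (x b / ‖x‖))

/-- The `j`-th column `G_{(j)}` of the Green's function. -/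
def GreenCol (n : ℕ) (j : Fin n) : Euc n → Euc n :=
  fun x => (EuclideanSpace.equiv (Fin n) ℝ).symm fun a => GreenFn n a j x

/-- The Japanese-bracket weight `⟨x⟩^{-n - p δ}`. -/
def jweight (n : ℕ) (p δ : ℝ) (x : Euc n) : ℝ :=
  (1 + ‖x‖ ^ 2) ^ ((-(n : ℝ) - p * δ) / 2)

/-- The finite set of multi-indices of total degree at most `k`. -/
def midx (n k : ℕ) : Finset (Fin n → Fin (k + 1)) :=
  Finset.univ.filter fun α => ∑ i, (α i : ℕ) ≤ k

/-- The `p`-th power of the weighted Sobolev norm `‖f‖_{W^{k,p}_δ}`, with the integrals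
taken over the set `s`. -/
def wnormPOn (p δ : ℝ) (k : ℕ) (f : Euc n → ℝ) (s : Set (Euc n)) : ℝ≥0∞ :=
  ∑ α ∈ midx n k,
    ∫⁻ x in s, ENNReal.ofReal (jweight n p δ x * |mderiv (fun i => (α i : ℕ)) f x| ^ p)

/-- The `p`-th power of the weighted Sobolev norm `‖f‖_{W^{k,p}_δ}`. -/
def wnormP (p δ : ℝ) (k : ℕ) (f : Euc n → ℝ) : ℝ≥0∞ := wnormPOn p δ k f Set.univ

/-- The weighted Sobolev norm `‖f‖_{W^{k,p}_δ}` of a scalar function, valued in `ℝ≥0∞`. -/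
def wnorm (p δ : ℝ) (k : ℕ) (f : Euc n → ℝ) : ℝ≥0∞ := wnormP p δ k f ^ (1 / p)

/-- The weighted Sobolev norm of a vector field: componentwise, summed. -/
def wnormV (p δ : ℝ) (k : ℕ) (F : Euc n → Euc n) : ℝ≥0∞ :=
  ∑ a, wnorm p δ k fun x => F x a

/-- A weight `δ` is nonexceptional if it is not an integer, or if `2 - n < δ < 0`. -/
def Nonexceptional (n : ℕ) (δ : ℝ) : Prop :=
  (¬ ∃ m : ℤ, δ = m) ∨ (2 - (n : ℝ) < δ ∧ δ < 0)

open scoped NNReal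

lemma normsq_eq {m : ℕ} (x : Euc m) : ‖x‖^2 = ∑ i, x i ^ 2 := by
  rw [EuclideanSpace.norm_eq, Real.sq_sqrt (by positivity)]
  simp [Real.norm_eq_abs, sq_abs]

def projE {m : ℕ} (a : Fin (m+1)) (x : Euc (m+1)) : Euc m := WithLp.toLp 2 (fun j => x (a.succAbove j))

def insE {m : ℕ} (a : Fin (m+1)) (t : ℝ) (y : Euc m) : Euc (m+1) := WithLp.toLp 2 (Fin.insertNth (α := fun _ => ℝ) a t y.ofLp)

lemma lipschitz_projE {m : ℕ} (a : Fin (m+1)) : LipschitzWith 1 (projE (m := m) a) := by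
  apply LipschitzWith.of_dist_le_mul
  intro x y
  push_cast
  rw [one_mul, EuclideanSpace.dist_eq, EuclideanSpace.dist_eq]
  apply Real.sqrt_le_sqrt
  rw [Fin.sum_univ_succAbove (fun i => dist (x i) (y i) ^ 2) a]
  have h : ∑ j, dist (projE a x j) (projE a y j) ^ 2
      = ∑ j, dist (x (a.succAbove j)) (y (a.succAbove j)) ^ 2 := rfl
  rw [h]
  have : (0:ℝ) ≤ dist (x a) (y a) ^ 2 := by positivity
  linarith

lemma dist_insE {m : ℕ} (a : Fin (m+1)) (t t' : ℝ) (y y' : Euc m) :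
    dist (insE a t y) (insE a t' y') = Real.sqrt ((t - t')^2 + dist y y' ^ 2) := by
  rw [EuclideanSpace.dist_eq]
  congr 1
  rw [Fin.sum_univ_succAbove (fun i => dist (insE a t y i) (insE a t' y' i) ^ 2) a]
  have h1 : dist (insE a t y a) (insE a t' y' a) = dist t t' := by
    simp [insE, Fin.insertNth_apply_same]
  have h2 : ∀ j, dist (insE a t y (a.succAbove j)) (insE a t' y' (a.succAbove j))
      = dist (y j) (y' j) := by
    intro j; simp [insE, Fin.insertNth_apply_succAbove]
  simp only [h1, h2]
  rw [EuclideanSpace.dist_eq, Real.sq_sqrt (by positivity), Real.dist_eq, sq_abs]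

lemma normsq_insE {m : ℕ} (a : Fin (m+1)) (t : ℝ) (y : Euc m) :
    ‖insE a t y‖^2 = t^2 + ‖y‖^2 := by
  rw [normsq_eq, Fin.sum_univ_succAbove (fun i => insE a t y i ^ 2) a]
  have h1 : insE a t y a = t :=
    Fin.insertNth_apply_same (α := fun _ : Fin (m+1) => ℝ) a t y
  have h2 : ∀ j, insE a t y (a.succAbove j) = y j := fun j =>
    Fin.insertNth_apply_succAbove (α := fun _ : Fin (m+1) => ℝ) a t y j
  simp only [h1, h2]
  rw [normsq_eq]

lemma volume_image_le_hm (m : ℕ) (s : Set (Euc m)) :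
    volume ((WithLp.equiv 2 (Fin m → ℝ)) '' s) ≤ μH[(m:ℝ)] s := by
  have h := (PiLp.lipschitzWith_ofLp 2 (fun _ : Fin m => ℝ)).hausdorffMeasure_image_le
    (by positivity : (0:ℝ) ≤ (m:ℝ)) s
  have hpi : (μH[(m:ℝ)] : Measure (Fin m → ℝ)) = volume := by
    simpa using (hausdorffMeasure_pi_real (ι := Fin m))
  simpa [hpi] using h

lemma hm_pos_of_isOpen {m : ℕ} {s : Set (Euc m)} (hs : IsOpen s) (hne : s.Nonempty) :
    0 < μH[(m:ℝ)] s := by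
  refine lt_of_lt_of_le ?_ (volume_image_le_hm m s)
  have himg : (WithLp.equiv 2 (Fin m → ℝ)) '' s = (WithLp.equiv 2 (Fin m → ℝ)).symm ⁻¹' s :=
    Equiv.image_eq_preimage_symm _ _
  rw [himg]
  refine (hs.preimage (PiLp.continuous_toLp 2 (fun _ : Fin m => ℝ))).measure_pos volume ?_
  obtain ⟨x, hx⟩ := hne
  exact ⟨WithLp.equiv 2 _ x, by simpa using hx⟩

lemma hm_lt_top_of_isBounded {m : ℕ} {s : Set (Euc m)} (hs : Bornology.IsBounded s) :
    μH[(m:ℝ)] s < ⊤ := by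
  have h := (PiLp.antilipschitzWith_ofLp 2 (fun _ : Fin m => ℝ)).le_hausdorffMeasure_image
    (by positivity : (0:ℝ) ≤ (m:ℝ)) s
  have hpi : (μH[(m:ℝ)] : Measure (Fin m → ℝ)) = volume := by
    simpa using (hausdorffMeasure_pi_real (ι := Fin m))
  rw [hpi] at h
  refine lt_of_le_of_lt h ?_
  refine ENNReal.mul_lt_top ?_ ?_
  · exact (ENNReal.rpow_ne_top_of_nonneg (by positivity) ENNReal.coe_ne_top).lt_top
  · exact ((PiLp.lipschitzWith_ofLp 2 (fun _ : Fin m => ℝ)).isBounded_image hs).measure_lt_top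

/-- Positivity of the sphere's Hausdorff measure. -/
lemma sphere_hm_pos (m : ℕ) : 0 < μH[(m:ℝ)] (Metric.sphere (0 : Euc (m+1)) 1) := by
  set S := Metric.sphere (0 : Euc (m+1)) 1
  have h1 : Metric.ball (0 : Euc m) 1 ⊆ projE 0 '' S := by
    intro y hy
    have hy1 : ‖y‖ < 1 := by simpa using hy
    have harg : (0:ℝ) ≤ 1 - ‖y‖^2 := by nlinarith [norm_nonneg y]
    refine ⟨insE 0 (Real.sqrt (1 - ‖y‖^2)) y, ?_, ?_⟩
    · have hsq : ‖insE 0 (Real.sqrt (1 - ‖y‖^2)) y‖^2 = 1 := by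
        rw [normsq_insE, Real.sq_sqrt harg]; ring
      have := norm_nonneg (insE 0 (Real.sqrt (1 - ‖y‖^2)) y)
      simp only [S, Metric.mem_sphere, dist_zero_right]
      nlinarith
    · ext j
      exact Fin.insertNth_apply_succAbove (α := fun _ : Fin (m+1) => ℝ) 0 (Real.sqrt (1 - ‖y‖^2)) y j
  calc (0:ℝ≥0∞) < μH[(m:ℝ)] (Metric.ball (0 : Euc m) 1) :=
        hm_pos_of_isOpen Metric.isOpen_ball ⟨0, by simp⟩
    _ ≤ μH[(m:ℝ)] (projE 0 '' S) := measure_mono h1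
    _ ≤ (1:ℝ≥0∞)^(m:ℝ) * μH[(m:ℝ)] S :=
        (lipschitz_projE 0).hausdorffMeasure_image_le (by positivity) S
    _ = μH[(m:ℝ)] S := by simp

def capM {m : ℕ} (a : Fin (m+1)) (σ : ℝ) (y : Euc m) : Euc (m+1) :=
  insE a (σ * Real.sqrt (1 - ‖y‖^2)) y

set_option maxHeartbeats 1600000 in
lemma sqw_lip {m : ℕ} {y z : Euc m}
    (hy : ‖y‖^2 ≤ 1 - 1/(m+1:ℝ)) (hz : ‖z‖^2 ≤ 1 - 1/(m+1:ℝ)) :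
    |Real.sqrt (1 - ‖y‖^2) - Real.sqrt (1 - ‖z‖^2)| ^ 2 ≤ (m+1:ℝ) * dist y z ^ 2 := by
  set N : ℝ := (m+1:ℝ)
  have hN : (0:ℝ) < N := by positivity
  set A := 1 - ‖y‖^2 with hA
  set B := 1 - ‖z‖^2 with hB
  have hA1 : 1/N ≤ A := by simp only [hA]; linarith
  have hB1 : 1/N ≤ B := by simp only [hB]; linarith
  have hA0 : (0:ℝ) ≤ A := le_trans (by positivity) hA1
  have hB0 : (0:ℝ) ≤ B := le_trans (by positivity) hB1
  have hsA : Real.sqrt A ^ 2 = A := Real.sq_sqrt hA0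
  have hsB : Real.sqrt B ^ 2 = B := Real.sq_sqrt hB0
  have hsA1 : Real.sqrt (1/N) ≤ Real.sqrt A := Real.sqrt_le_sqrt hA1
  have hsB1 : Real.sqrt (1/N) ≤ Real.sqrt B := Real.sqrt_le_sqrt hB1
  have hs0 : Real.sqrt (1/N) ^ 2 = 1/N := Real.sq_sqrt (by positivity)
  have hs0pos : 0 < Real.sqrt (1/N) := Real.sqrt_pos.2 (by positivity)
  -- |‖z‖² - ‖y‖²| ≤ 2 dist y z  (using norms ≤ 1)
  have hyn : ‖y‖ ≤ 1 := by nlinarith [norm_nonneg y]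
  have hzn : ‖z‖ ≤ 1 := by nlinarith [norm_nonneg z]
  have hdist : |‖z‖ - ‖y‖| ≤ dist y z := by
    rw [dist_comm, dist_eq_norm]
    exact abs_norm_sub_norm_le z y
  have hAB : |A - B| ≤ 2 * dist y z := by
    have h1 : A - B = (‖z‖ - ‖y‖) * (‖z‖ + ‖y‖) := by simp only [hA, hB]; ring
    rw [h1, abs_mul]
    have h2 : |‖z‖ + ‖y‖| ≤ 2 := by rw [abs_of_nonneg (by positivity)]; linarith
    have := abs_nonneg (‖z‖ - ‖y‖)
    nlinarith [dist_nonneg (x := y) (y := z)]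
  -- (√A - √B)(√A + √B) = A - B
  have hprod : (Real.sqrt A - Real.sqrt B) * (Real.sqrt A + Real.sqrt B) = A - B := by
    nlinarith [hsA, hsB]
  have key : |Real.sqrt A - Real.sqrt B| * (Real.sqrt A + Real.sqrt B) = |A - B| := by
    rw [← abs_of_nonneg (show (0:ℝ) ≤ Real.sqrt A + Real.sqrt B by positivity),
      ← abs_mul, hprod]
  have hsum : 2 * Real.sqrt (1/N) ≤ Real.sqrt A + Real.sqrt B := by linarith
  have habs0 : 0 ≤ |Real.sqrt A - Real.sqrt B| := abs_nonneg _
  -- conclude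
  have hmain : |Real.sqrt A - Real.sqrt B| * Real.sqrt (1/N) ≤ dist y z := by
    have h1 : |Real.sqrt A - Real.sqrt B| * (2 * Real.sqrt (1/N))
        ≤ |Real.sqrt A - Real.sqrt B| * (Real.sqrt A + Real.sqrt B) :=
      mul_le_mul_of_nonneg_left hsum habs0
    rw [key] at h1
    linarith
  have hsq := pow_le_pow_left₀ (by positivity) hmain 2
  have hd0 := dist_nonneg (x := y) (y := z)
  have hexp : (|Real.sqrt A - Real.sqrt B| * Real.sqrt (1/N))^2
      = |Real.sqrt A - Real.sqrt B|^2 * (1/N) := by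
    rw [mul_pow, hs0]
  rw [hexp] at hsq
  calc |Real.sqrt A - Real.sqrt B| ^ 2
      = (|Real.sqrt A - Real.sqrt B| ^2 * (1/N)) * N := by field_simp
    _ ≤ dist y z ^2 * N := mul_le_mul_of_nonneg_right hsq hN.le
    _ = N * dist y z ^2 := by ring

lemma capM_lipschitzOn {m : ℕ} (hm : 1 ≤ m) (a : Fin (m+1)) (σ : ℝ) (hσ : σ^2 = 1) :
    LipschitzOnWith ((m:ℝ≥0)+1) (capM a σ)
      (Metric.closedBall (0 : Euc m) (Real.sqrt (1 - 1/(m+1:ℝ)))) := by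
  apply LipschitzOnWith.of_dist_le_mul
  intro y hy z hz
  set r := Real.sqrt (1 - 1/(m+1:ℝ)) with hr
  have hr2 : r^2 = 1 - 1/(m+1:ℝ) := Real.sq_sqrt (by
    have : (1:ℝ) ≤ (m+1:ℝ) := by exact_mod_cast Nat.le_add_left 1 m
    have : 1/(m+1:ℝ) ≤ 1 := by
      rw [div_le_one (by positivity)]; linarith
    linarith)
  have hy' : ‖y‖ ≤ r := by simpa using hy
  have hz' : ‖z‖ ≤ r := by simpa using hz
  have hrpos : 0 ≤ r := Real.sqrt_nonneg _
  have hy2 : ‖y‖^2 ≤ 1 - 1/(m+1:ℝ) := by nlinarith [norm_nonneg y]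
  have hz2 : ‖z‖^2 ≤ 1 - 1/(m+1:ℝ) := by nlinarith [norm_nonneg z]
  have hlip := sqw_lip hy2 hz2
  rw [capM, capM, dist_insE]
  have hcoe : (((m:ℝ≥0)+1 : ℝ≥0) : ℝ) = (m+1:ℝ) := by push_cast; ring
  rw [hcoe]
  have hd0 := dist_nonneg (x := y) (y := z)
  have hgoal : (σ * Real.sqrt (1 - ‖y‖^2) - σ * Real.sqrt (1 - ‖z‖^2))^2 + dist y z ^2
      ≤ ((m+1:ℝ) * dist y z)^2 := by
    have h1 : (σ * Real.sqrt (1 - ‖y‖^2) - σ * Real.sqrt (1 - ‖z‖^2))^2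
        = σ^2 * (Real.sqrt (1 - ‖y‖^2) - Real.sqrt (1 - ‖z‖^2))^2 := by ring
    rw [h1, hσ, one_mul]
    have h2 : (Real.sqrt (1 - ‖y‖^2) - Real.sqrt (1 - ‖z‖^2))^2
        = |Real.sqrt (1 - ‖y‖^2) - Real.sqrt (1 - ‖z‖^2)|^2 := (sq_abs _).symm
    rw [h2]
    have hm' : (1:ℝ) ≤ (m:ℝ) := by exact_mod_cast hm
    nlinarith
  calc Real.sqrt ((σ * Real.sqrt (1 - ‖y‖^2) - σ * Real.sqrt (1 - ‖z‖^2))^2 + dist y z ^2)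
      ≤ Real.sqrt (((m+1:ℝ) * dist y z)^2) := Real.sqrt_le_sqrt hgoal
    _ = (m+1:ℝ) * dist y z := by
        rw [Real.sqrt_sq (by positivity)]

/-- Finiteness of the sphere's Hausdorff measure. -/
lemma sphere_hm_lt_top (m : ℕ) (hm : 1 ≤ m) :
    μH[(m:ℝ)] (Metric.sphere (0 : Euc (m+1)) 1) < ⊤ := by
  set r := Real.sqrt (1 - 1/(m+1:ℝ)) with hr
  set Bc := Metric.closedBall (0 : Euc m) r with hBc
  have hcover : Metric.sphere (0 : Euc (m+1)) 1 ⊆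
      ⋃ (a : Fin (m+1)), (capM a 1 '' Bc ∪ capM a (-1) '' Bc) := by
    intro ω hω
    have hω1 : ‖ω‖ = 1 := by simpa using hω
    have hsum : ∑ i, ω i ^ 2 = 1 := by rw [← normsq_eq, hω1]; norm_num
    -- find a coordinate with ω_a² ≥ 1/(m+1)
    have hex : ∃ a, 1/(m+1:ℝ) ≤ ω a ^ 2 := by
      by_contra hcon
      push_neg at hcon
      have : ∑ i, ω i ^2 < ∑ _i : Fin (m+1), 1/(m+1:ℝ) :=
        Finset.sum_lt_sum_of_nonempty (by simp) (fun i _ => hcon i)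
      rw [hsum] at this
      simp only [Finset.sum_const, Finset.card_univ, Fintype.card_fin, nsmul_eq_mul] at this
      push_cast at this
      rw [mul_one_div, div_self (by positivity : ((m:ℝ)+1) ≠ 0)] at this
      exact lt_irrefl _ this
    obtain ⟨a, ha⟩ := hex
    set y : Euc m := projE a ω with hy
    have hyval : ∀ j, y j = ω (a.succAbove j) := fun j => rfl
    have hynorm : ‖y‖^2 = 1 - ω a ^2 := by
      rw [normsq_eq]
      have := Fin.sum_univ_succAbove (fun i => ω i ^ 2) a
      rw [this] at hsum
      simp only [hyval]
      linarith
    have hymem : y ∈ Bc := by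
      rw [hBc, Metric.mem_closedBall, dist_zero_right]
      have h1 : ‖y‖^2 ≤ r^2 := by
        rw [hr, Real.sq_sqrt]
        · rw [hynorm]; linarith
        · have h2 : 1/(m+1:ℝ) ≤ 1 := by
            rw [div_le_one (by positivity)]
            have : (0:ℝ) ≤ (m:ℝ) := by positivity
            linarith
          linarith
      nlinarith [norm_nonneg y, Real.sqrt_nonneg (1 - 1/(m+1:ℝ))]
    have hsqw : Real.sqrt (1 - ‖y‖^2) = |ω a| := by
      rw [hynorm]
      have : 1 - (1 - ω a ^2) = ω a ^2 := by ring
      rw [this, Real.sqrt_sq_eq_abs]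
    set σ : ℝ := if 0 ≤ ω a then 1 else -1 with hσdef
    have hcap : capM a σ y = ω := by
      ext i
      by_cases hi : i = a
      · subst hi
        have h1 : capM i σ y i = σ * Real.sqrt (1 - ‖y‖^2) :=
          Fin.insertNth_apply_same (α := fun _ : Fin (m+1) => ℝ) i _ y
        rw [h1, hsqw, hσdef]
        by_cases hpos : 0 ≤ ω i
        · simp [hpos, abs_of_nonneg hpos]
        · simp [hpos, abs_of_neg (lt_of_not_ge hpos)]
      · obtain ⟨j, hj⟩ := Fin.exists_succAbove_eq (show i ≠ a from hi)
        rw [← hj]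
        exact Fin.insertNth_apply_succAbove (α := fun _ : Fin (m+1) => ℝ) a _ y j
    refine Set.mem_iUnion.2 ⟨a, ?_⟩
    by_cases hpos : 0 ≤ ω a
    · exact Or.inl ⟨y, hymem, by rwa [show σ = 1 by simp [hσdef, hpos]] at hcap⟩
    · exact Or.inr ⟨y, hymem, by rwa [show σ = -1 by simp [hσdef, hpos]] at hcap⟩
  refine lt_of_le_of_lt (measure_mono hcover) ?_
  refine lt_of_le_of_lt (measure_iUnion_le _) ?_
  have hterm : ∀ a : Fin (m+1),
      μH[(m:ℝ)] (capM (m := m) a 1 '' Bc ∪ capM a (-1) '' Bc) < ⊤ := by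
    intro a
    refine lt_of_le_of_lt (measure_union_le _ _) ?_
    have hb : μH[(m:ℝ)] Bc < ⊤ := hm_lt_top_of_isBounded Metric.isBounded_closedBall
    have h1 := (capM_lipschitzOn hm a 1 (by norm_num)).hausdorffMeasure_image_le
      (by positivity : (0:ℝ) ≤ (m:ℝ))
    have h2 := (capM_lipschitzOn hm a (-1) (by norm_num)).hausdorffMeasure_image_le
      (by positivity : (0:ℝ) ≤ (m:ℝ))
    have hK : ((((m:ℝ≥0)+1 : ℝ≥0)) : ℝ≥0∞) ^ (m:ℝ) ≠ ⊤ :=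
      ENNReal.rpow_ne_top_of_nonneg (by positivity) ENNReal.coe_ne_top
    have hfin1 : μH[(m:ℝ)] (capM (m := m) a 1 '' Bc) < ⊤ :=
      lt_of_le_of_lt h1 (ENNReal.mul_lt_top hK.lt_top hb)
    have hfin2 : μH[(m:ℝ)] (capM (m := m) a (-1) '' Bc) < ⊤ :=
      lt_of_le_of_lt h2 (ENNReal.mul_lt_top hK.lt_top hb)
    exact ENNReal.add_lt_top.2 ⟨hfin1, hfin2⟩
  rw [tsum_fintype]
  exact ENNReal.sum_lt_top.2 (fun a _ => hterm a)

lemma sphere_measurable (n : ℕ) : MeasurableSet (Metric.sphere (0 : Euc n) 1) :=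
  Metric.isClosed_sphere.measurableSet

/-- change of variables by a linear isometry preserving the sphere -/
lemma integral_sphere_comp (d : ℝ) (T : Euc n ≃ₗᵢ[ℝ] Euc n) (f : Euc n → ℝ)
    (hf : Continuous f) :
    ∫ ω in Metric.sphere (0 : Euc n) 1, f ω ∂μH[d]
      = ∫ ω in Metric.sphere (0 : Euc n) 1, f (T ω) ∂μH[d] := by
  set S := Metric.sphere (0 : Euc n) 1 with hS
  have hpre : (T : Euc n → Euc n) ⁻¹' S = S := by
    ext x
    simp only [hS, Set.mem_preimage, Metric.mem_sphere, dist_zero_right]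
    rw [T.norm_map]
  have hmp : MeasurePreserving (T : Euc n → Euc n) μH[d] μH[d] :=
    T.toIsometryEquiv.measurePreserving_hausdorffMeasure d
  have hmap : Measure.map (T : Euc n → Euc n) (μH[d].restrict S) = μH[d].restrict S := by
    conv_lhs => rw [← hpre]
    rw [← Measure.restrict_map hmp.measurable (sphere_measurable n), hmp.map_eq]
  calc ∫ ω in S, f ω ∂μH[d]
      = ∫ ω, f ω ∂(Measure.map (T : Euc n → Euc n) (μH[d].restrict S)) := by rw [hmap]
    _ = ∫ ω in S, f (T ω) ∂μH[d] :=
        integral_map hmp.measurable.aemeasurable hf.aestronglyMeasurable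

def reflT (i : Fin n) : Euc n ≃ₗᵢ[ℝ] Euc n :=
  LinearIsometryEquiv.piLpCongrRight 2
    (fun j => if j = i then LinearIsometryEquiv.neg ℝ else LinearIsometryEquiv.refl ℝ ℝ)

lemma reflT_apply (i j : Fin n) (x : Euc n) :
    reflT i x j = if j = i then -(x j) else x j := by
  have h := LinearIsometryEquiv.piLpCongrRight_apply (𝕜 := ℝ) (p := 2)
    (fun j : Fin n => if j = i then LinearIsometryEquiv.neg ℝ else LinearIsometryEquiv.refl ℝ ℝ) x
  have h2 : reflT i x j
      = (if j = i then LinearIsometryEquiv.neg ℝ else LinearIsometryEquiv.refl ℝ ℝ) (x j) := by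
    rw [reflT, h]
  rw [h2]
  by_cases hj : j = i <;> simp [hj]

def swapT (i k : Fin n) : Euc n ≃ₗᵢ[ℝ] Euc n :=
  LinearIsometryEquiv.piLpCongrLeft 2 ℝ ℝ (Equiv.swap i k)

lemma swapT_apply (i k j : Fin n) (x : Euc n) :
    swapT i k x j = x (Equiv.swap i k j) := by
  have h := LinearIsometryEquiv.piLpCongrLeft_apply (p := 2) (𝕜 := ℝ) (E := ℝ) (Equiv.swap i k) x
  rw [swapT, h]
  simp [Equiv.piCongrLeft'_apply, Equiv.symm_swap]

lemma cont_coord (i : Fin n) : Continuous (fun x : Euc n => x i) :=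
  (EuclideanSpace.proj (𝕜 := ℝ) i).continuous

lemma integral_sphere_offdiag (d : ℝ) {i k : Fin n} (h : i ≠ k) :
    ∫ ω in Metric.sphere (0 : Euc n) 1, ω i * ω k ∂μH[d] = 0 := by
  have hf : Continuous (fun ω : Euc n => ω i * ω k) := (cont_coord i).mul (cont_coord k)
  have hc := integral_sphere_comp d (reflT i) _ hf
  have heq : ∀ ω : Euc n, (reflT i ω) i * (reflT i ω) k = -(ω i * ω k) := by
    intro ω
    rw [reflT_apply, reflT_apply]
    simp [h.symm]
  simp only [heq] at hc
  rw [integral_neg] at hc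
  linarith

lemma integral_sphere_sq (d : ℝ) (hfin : μH[d] (Metric.sphere (0 : Euc n) 1) ≠ ⊤)
    (hn : 0 < n) (i : Fin n) :
    ∫ ω in Metric.sphere (0 : Euc n) 1, (ω i)^2 ∂μH[d]
      = (μH[d] (Metric.sphere (0 : Euc n) 1)).toReal / n := by
  set S := Metric.sphere (0 : Euc n) 1 with hS
  have hint : ∀ j : Fin n, IntegrableOn (fun ω : Euc n => (ω j)^2) S μH[d] := by
    intro j
    refine Measure.integrableOn_of_bounded (M := 1) hfin
      ((cont_coord j).pow 2).aestronglyMeasurable ?_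
    filter_upwards [ae_restrict_mem (sphere_measurable n)] with ω hω
    have hω1 : ‖ω‖ = 1 := by simpa [hS] using hω
    have hsq : (ω j)^2 ≤ 1 := by
      have h2 : ‖ω‖^2 = ∑ c, ω c ^2 := by
        rw [EuclideanSpace.norm_eq, Real.sq_sqrt (by positivity)]
        simp [Real.norm_eq_abs, sq_abs]
      have h3 : (ω j)^2 ≤ ∑ c, ω c ^2 :=
        Finset.single_le_sum (fun c _ => sq_nonneg (ω c)) (Finset.mem_univ j)
      rw [← h2, hω1] at h3
      simpa using h3
    rw [Real.norm_eq_abs, abs_of_nonneg (sq_nonneg _)]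
    exact hsq
  have hall : ∀ j : Fin n, ∫ ω in S, (ω j)^2 ∂μH[d] = ∫ ω in S, (ω i)^2 ∂μH[d] := by
    intro j
    have hf : Continuous (fun ω : Euc n => (ω j)^2) := (cont_coord j).pow 2
    have hc := integral_sphere_comp d (swapT j i) _ hf
    have heq : ∀ ω : Euc n, (swapT j i ω j)^2 = (ω i)^2 := by
      intro ω; rw [swapT_apply, Equiv.swap_apply_left]
    simp only [heq] at hc
    exact hc
  have hsum : ∑ j : Fin n, ∫ ω in S, (ω j)^2 ∂μH[d] = (μH[d] S).toReal := by
    rw [← integral_finset_sum _ (fun j _ => hint j)]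
    have : ∀ ω : Euc n, ω ∈ S → ∑ j, (ω j)^2 = 1 := by
      intro ω hω
      have hω1 : ‖ω‖ = 1 := by simpa [hS] using hω
      have : ‖ω‖^2 = ∑ j, ω j ^2 := by
        rw [EuclideanSpace.norm_eq, Real.sq_sqrt (by positivity)]
        simp [Real.norm_eq_abs, sq_abs]
      rw [← this, hω1]; norm_num
    rw [setIntegral_congr_fun (sphere_measurable n) this]
    simp [Measure.restrict_apply_univ]
    rfl
  rw [Finset.sum_congr rfl (fun j _ => hall j)] at hsum
  simp only [Finset.sum_const, Finset.card_univ, Fintype.card_fin, nsmul_eq_mul] at hsum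
  field_simp
  rw [mul_comm] at hsum
  exact hsum

def qf : Euc n → ℝ := fun x => ∑ i, x i ^ 2

def qD (x : Euc n) : Euc n →L[ℝ] ℝ :=
  ∑ i, (2 * x i) • (EuclideanSpace.proj (𝕜 := ℝ) i)

lemma qf_eq (x : Euc n) : qf x = ‖x‖ ^ 2 := by
  rw [EuclideanSpace.norm_eq, Real.sq_sqrt (by positivity)]
  simp [qf, Real.norm_eq_abs, sq_abs]

lemma hasFDerivAt_qf (x : Euc n) : HasFDerivAt qf (qD x) x := by
  have h : ∀ i ∈ Finset.univ, HasFDerivAt (fun y : Euc n => y i ^ 2)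
      ((2 * x i) • (EuclideanSpace.proj (𝕜 := ℝ) i)) x := by
    intro i _
    have h1 : HasFDerivAt (fun y : Euc n => y i) (EuclideanSpace.proj (𝕜 := ℝ) i) x :=
      (EuclideanSpace.proj (𝕜 := ℝ) i).hasFDerivAt
    have h2 : HasFDerivAt (fun y : Euc n => y i * y i)
        ((x i) • (EuclideanSpace.proj (𝕜 := ℝ) i) + (x i) • (EuclideanSpace.proj (𝕜 := ℝ) i)) x :=
      h1.mul h1
    have h3 : (fun y : Euc n => y i ^ 2) = fun y => y i * y i := by funext y; ring
    have h4 : (2 * x i) • (EuclideanSpace.proj (𝕜 := ℝ) i)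
        = (x i) • (EuclideanSpace.proj (𝕜 := ℝ) i) + (x i) • (EuclideanSpace.proj (𝕜 := ℝ) i) := by
      rw [two_mul, add_smul]
    rw [h3, h4]
    exact h2
  exact HasFDerivAt.fun_sum h

lemma qD_apply (x : Euc n) (b : Fin n) : qD x (EuclideanSpace.single b 1) = 2 * x b := by
  simp only [qD, ContinuousLinearMap.sum_apply, ContinuousLinearMap.smul_apply,
    PiLp.proj_apply, EuclideanSpace.single_apply, smul_eq_mul]
  rw [Finset.sum_eq_single b]
  · simp
  · intro c _ hc; simp [hc]
  · intro hb; exact absurd (Finset.mem_univ b) hb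

def Gx (n : ℕ) (a c : Fin n) : Euc n → ℝ := fun x =>
  (-2 * Cconst n) * ((3 * (n:ℝ) - 2) * (if a = c then 1 else 0) * (qf x) ^ (((2:ℝ) - n)/2)
    + ((n:ℝ) - 2) ^ 2 * (x a * x c * (qf x) ^ (-(n:ℝ)/2)))

lemma green_eq (hn : 3 ≤ n) (a c : Fin n) : GreenFn n a c = Gx n a c := by
  have hn3 : (3:ℝ) ≤ (n:ℝ) := by exact_mod_cast hn
  funext x
  by_cases hx : x = 0
  · subst hx
    have h0 : ‖(0 : Euc n)‖ = 0 := norm_zero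
    have hq0 : qf (0 : Euc n) = 0 := by rw [qf_eq, h0]; norm_num
    have hz : (0:Euc n) a = 0 := rfl
    have hz' : (0:Euc n) c = 0 := rfl
    rw [GreenFn, Gx, h0, hq0, hz, hz']
    rw [Real.zero_rpow (by linarith : (2:ℝ) - n ≠ 0),
      Real.zero_rpow (by intro h; rw [div_eq_zero_iff] at h; rcases h with h | h <;> linarith),
      Real.zero_rpow (by intro h; rw [div_eq_zero_iff] at h; rcases h with h | h <;> linarith)]
    ring
  · have hxn : 0 < ‖x‖ := norm_pos_iff.2 hx
    have hq : qf x = ‖x‖ ^ (2:ℝ) := by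
      rw [qf_eq, ← Real.rpow_natCast ‖x‖ 2]; norm_num
    have key1 : (qf x) ^ (((2:ℝ) - n)/2) = ‖x‖ ^ ((2:ℝ) - n) := by
      rw [hq, ← Real.rpow_mul hxn.le]
      congr 1; ring
    have key2 : (qf x) ^ (-(n:ℝ)/2) = ‖x‖ ^ (-(n:ℝ)) := by
      rw [hq, ← Real.rpow_mul hxn.le]
      congr 1; ring
    have key3 : ‖x‖ ^ ((2:ℝ) - n) = ‖x‖ ^ (-(n:ℝ)) * ‖x‖^2 := by
      rw [show (2:ℝ) - n = -(n:ℝ) + 2 by ring, Real.rpow_add hxn, ← Real.rpow_natCast ‖x‖ 2]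
      norm_num
    rw [GreenFn, Gx, key1, key2, key3]
    by_cases hac : a = c <;> simp only [hac, if_true, if_false] <;> field_simp <;> ring

lemma pd_GreenFn (hn : 3 ≤ n) (a c b : Fin n) {ω : Euc n} (hω : ‖ω‖ = 1) :
    pd b (GreenFn n a c) ω =
      (-2 * Cconst n) * ((3 * (n:ℝ) - 2) * (if a = c then 1 else 0) * ((2:ℝ) - n) * ω b
        + ((n:ℝ) - 2) ^ 2 * ((if a = b then 1 else 0) * ω c + (if c = b then 1 else 0) * ω a
          - (n:ℝ) * (ω a * ω c * ω b))) := by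
  have hω0 : ω ≠ 0 := by intro h; rw [h, norm_zero] at hω; norm_num at hω
  have hq1 : qf ω = 1 := by rw [qf_eq, hω]; norm_num
  have hD := hasFDerivAt_qf ω
  set s1 : ℝ := ((2:ℝ) - n)/2 with hs1
  set s2 : ℝ := -(n:ℝ)/2 with hs2
  have h1 : HasFDerivAt (fun y : Euc n => (qf y) ^ s1)
      ((s1 * (qf ω) ^ (s1 - 1)) • qD ω) ω :=
    hD.rpow_const (Or.inl (by rw [hq1]; norm_num))
  have h2 : HasFDerivAt (fun y : Euc n => (qf y) ^ s2)
      ((s2 * (qf ω) ^ (s2 - 1)) • qD ω) ω :=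
    hD.rpow_const (Or.inl (by rw [hq1]; norm_num))
  have hca : HasFDerivAt (fun y : Euc n => y a) (EuclideanSpace.proj (𝕜 := ℝ) a) ω :=
    (EuclideanSpace.proj (𝕜 := ℝ) a).hasFDerivAt
  have hcc : HasFDerivAt (fun y : Euc n => y c) (EuclideanSpace.proj (𝕜 := ℝ) c) ω :=
    (EuclideanSpace.proj (𝕜 := ℝ) c).hasFDerivAt
  have hac : HasFDerivAt (fun y : Euc n => y a * y c)
      (ω a • (EuclideanSpace.proj (𝕜 := ℝ) c) + ω c • (EuclideanSpace.proj (𝕜 := ℝ) a)) ω :=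
    hca.mul hcc
  have hprod : HasFDerivAt (fun y : Euc n => (y a * y c) * (qf y) ^ s2)
      ((ω a * ω c) • ((s2 * (qf ω) ^ (s2 - 1)) • qD ω)
        + ((qf ω) ^ s2) • (ω a • (EuclideanSpace.proj (𝕜 := ℝ) c)
            + ω c • (EuclideanSpace.proj (𝕜 := ℝ) a))) ω :=
    hac.mul h2
  have hG : HasFDerivAt (Gx n a c)
      ((-2 * Cconst n) • ((((3 * (n:ℝ) - 2) * (if a = c then 1 else 0)))
          • ((s1 * (qf ω) ^ (s1 - 1)) • qD ω)
        + (((n:ℝ) - 2) ^ 2) • ((ω a * ω c) • ((s2 * (qf ω) ^ (s2 - 1)) • qD ω)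
          + ((qf ω) ^ s2) • (ω a • (EuclideanSpace.proj (𝕜 := ℝ) c)
              + ω c • (EuclideanSpace.proj (𝕜 := ℝ) a))))) ω :=
    ((h1.const_mul ((3 * (n:ℝ) - 2) * (if a = c then 1 else 0))).add
      (hprod.const_mul (((n:ℝ) - 2) ^ 2))).const_mul (-2 * Cconst n)
  rw [green_eq hn a c, pd, hG.fderiv]
  have happ : ∀ j : Fin n, (EuclideanSpace.proj (𝕜 := ℝ) j) (EuclideanSpace.single b 1)
      = if j = b then 1 else 0 := by
    intro j; rw [PiLp.proj_apply, EuclideanSpace.single_apply]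
  simp only [ContinuousLinearMap.smul_apply, ContinuousLinearMap.add_apply, qD_apply,
    happ, smul_eq_mul, hq1, Real.one_rpow, hs1, hs2]
  ring

lemma ifflip (p q : Fin n) (r : ℝ) : (if p = q then r else 0) = if q = p then r else 0 := by
  by_cases h : p = q
  · simp [h]
  · simp [h, Ne.symm h]

lemma ifmul (p q : Fin n) (r : ℝ) : (if p = q then r else 0) = r * (if p = q then 1 else 0) := by
  by_cases h : p = q <;> simp [h]

lemma sum_sq_one {ω : Euc n} (hω : ‖ω‖ = 1) : ∑ b, ω b ^ 2 = 1 := by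
  have h := qf_eq ω
  rw [hω] at h
  simpa [qf] using h

lemma sum_if_mul (v : Euc n) (j : Fin n) :
    ∑ b, (if b = j then (1:ℝ) else 0) * v b = v j := by
  rw [Finset.sum_eq_single j]
  · simp
  · intro c _ hc; simp [hc]
  · intro hb; exact absurd (Finset.mem_univ j) hb

lemma sum_mul_if (v : Fin n → ℝ) (j : Fin n) :
    ∑ a, v a * (if a = j then (1:ℝ) else 0) = v j := by
  rw [Finset.sum_eq_single j]
  · simp
  · intro c _ hc; simp [hc]
  · intro hb; exact absurd (Finset.mem_univ j) hb

lemma div_green (hn : 3 ≤ n) (k : Fin n) {ω : Euc n} (hω : ‖ω‖ = 1) :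
    ∑ c, pd c (fun y => GreenCol n k y c) ω = 4 * Cconst n * (n:ℝ) * ((n:ℝ) - 2) * ω k := by
  have hs := sum_sq_one hω
  have hterm : ∀ c, pd c (fun y => GreenCol n k y c) ω
      = (-2 * Cconst n * (3*(n:ℝ)-2) * ((2:ℝ)-(n:ℝ))) * ((if c = k then 1 else 0) * ω c)
        + (-2 * Cconst n * ((n:ℝ)-2)^2) * ((if c = k then 1 else 0) * ω c)
        + (-2 * Cconst n * ((n:ℝ)-2)^2) * ω k
        + (2 * Cconst n * ((n:ℝ)-2)^2 * (n:ℝ) * ω k) * (ω c ^ 2) := by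
    intro c
    have h := pd_GreenFn hn c k c hω
    rw [show pd c (fun y => GreenCol n k y c) ω = pd c (GreenFn n c k) ω from rfl, h,
      ifflip k c]
    simp only [eq_self_iff_true, if_true]
    ring
  rw [Finset.sum_congr rfl (fun c _ => hterm c)]
  simp only [Finset.sum_add_distrib, ← Finset.mul_sum, sum_if_mul, hs, Finset.sum_const,
    Finset.card_univ, Fintype.card_fin, nsmul_eq_mul, mul_one]
  ring

lemma sum_cko (hn : 3 ≤ n) (i k : Fin n) {ω : Euc n} (hω : ‖ω‖ = 1) :
    ∑ b, cko (GreenCol n k) i b ω * ω b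
      = 4 * Cconst n * (n:ℝ) * ((n:ℝ)-2) * (if k = i then 1 else 0)
        + 4 * Cconst n * (n:ℝ) * ((n:ℝ)-2)^2 * (ω i * ω k) := by
  have hn0 : (n:ℝ) ≠ 0 := by
    have : (0:ℝ) < (n:ℝ) := by exact_mod_cast Nat.lt_of_lt_of_le (by norm_num) hn
    linarith
  have hs := sum_sq_one hω
  have hD := div_green hn k hω
  have hterm : ∀ b, cko (GreenCol n k) i b ω * ω b
      = (-2 * Cconst n * (3*(n:ℝ)-2) * ((2:ℝ)-(n:ℝ)) * ω i
          + -2 * Cconst n * ((n:ℝ)-2)^2 * ω i) * ((if b = k then 1 else 0) * ω b)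
        + (-2 * Cconst n * ((n:ℝ)-2)^2 * ω k + -2 * Cconst n * ((n:ℝ)-2)^2 * ω k
            - (2/(n:ℝ)) * (4 * Cconst n * (n:ℝ) * ((n:ℝ)-2) * ω k)) *
              ((if b = i then 1 else 0) * ω b)
        + ((-2 * Cconst n * ((n:ℝ)-2)^2 + -2 * Cconst n * (3*(n:ℝ)-2) * ((2:ℝ)-(n:ℝ)))
              * (if k = i then 1 else 0)
            + 4 * Cconst n * ((n:ℝ)-2)^2 * (n:ℝ) * (ω i * ω k)) * (ω b ^ 2) := by
    intro b
    have h1 := pd_GreenFn hn b k i hω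
    have h2 := pd_GreenFn hn i k b hω
    have hck : cko (GreenCol n k) i b ω
        = pd i (GreenFn n b k) ω + pd b (GreenFn n i k) ω
          - (if i = b then 2/(n:ℝ) else 0) * ∑ c, pd c (fun y => GreenCol n k y c) ω := rfl
    rw [hck, h1, h2, hD, ifflip i k 1, ifflip i b 1, ifflip k b 1, ifflip i b (2/(n:ℝ)),
      ifmul b i (2/(n:ℝ))]
    ring
  rw [Finset.sum_congr rfl (fun b _ => hterm b)]
  simp only [Finset.sum_add_distrib, ← Finset.mul_sum, sum_if_mul, hs, Finset.sum_const,
    Finset.card_univ, Fintype.card_fin, nsmul_eq_mul, mul_one]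
  field_simp
  ring

theorem statement14 (n : ℕ) (hn : 3 ≤ n) (i k : Fin n) :
    ∫ ω in Metric.sphere (0 : Euc n) 1,
        (∑ a, ∑ b, cko (GreenCol n k) a b ω * ω b * (EuclideanSpace.single i (1 : ℝ)) a)
        ∂(μH[(n : ℝ) - 1]) = if i = k then 2 else 0 := by
  classical
  obtain ⟨m, rfl⟩ : ∃ m, n = m + 1 := ⟨n - 1, by omega⟩
  have hm1 : 1 ≤ m := by omega
  have hd : ((m+1:ℕ):ℝ) - 1 = (m:ℝ) := by push_cast; ring
  have hfin : μH[((m+1:ℕ):ℝ) - 1] (Metric.sphere (0 : Euc (m+1)) 1) ≠ ⊤ := by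
    rw [hd]; exact (sphere_hm_lt_top m hm1).ne
  have hpos : 0 < μH[((m+1:ℕ):ℝ) - 1] (Metric.sphere (0 : Euc (m+1)) 1) := by
    rw [hd]; exact sphere_hm_pos m
  have hVpos : 0 < (μH[((m+1:ℕ):ℝ) - 1] (Metric.sphere (0 : Euc (m+1)) 1)).toReal :=
    ENNReal.toReal_pos hpos.ne' hfin
  have hsphVol : sphVol (m+1)
      = (μH[((m+1:ℕ):ℝ) - 1] (Metric.sphere (0 : Euc (m+1)) 1)).toReal := by
    rw [sphVol, sphMeas, Measure.restrict_apply_univ]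
  have hnn3 : (3:ℝ) ≤ ((m+1:ℕ):ℝ) := by exact_mod_cast hn
  have hn0 : ((m+1:ℕ):ℝ) ≠ 0 := by linarith
  have hn1 : ((m+1:ℕ):ℝ) - 1 ≠ 0 := by linarith
  have hn2 : ((m+1:ℕ):ℝ) - 2 ≠ 0 := by linarith
  have hcongr : ∀ ω ∈ Metric.sphere (0 : Euc (m+1)) 1,
      (∑ a, ∑ b, cko (GreenCol (m+1) k) a b ω * ω b * (EuclideanSpace.single i (1 : ℝ)) a)
        = 4 * Cconst (m+1) * ((m+1:ℕ):ℝ) * (((m+1:ℕ):ℝ)-2) * (if k = i then 1 else 0)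
          + 4 * Cconst (m+1) * ((m+1:ℕ):ℝ) * (((m+1:ℕ):ℝ)-2)^2 * (ω i * ω k) := by
    intro ω hω
    have hω1 : ‖ω‖ = 1 := by simpa using hω
    have hcollapse : ∀ a : Fin (m+1),
        ∑ b, cko (GreenCol (m+1) k) a b ω * ω b * (EuclideanSpace.single i (1 : ℝ)) a
          = (∑ b, cko (GreenCol (m+1) k) a b ω * ω b) * (if a = i then 1 else 0) := by
      intro a
      rw [Finset.sum_mul]
      refine Finset.sum_congr rfl (fun b _ => ?_)
      rw [EuclideanSpace.single_apply]
    rw [Finset.sum_congr rfl (fun a _ => hcollapse a), sum_mul_if, sum_cko hn i k hω1]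
  rw [setIntegral_congr_fun (sphere_measurable (m+1)) hcongr]
  have hIik : IntegrableOn (fun ω : Euc (m+1) => ω i * ω k)
      (Metric.sphere (0 : Euc (m+1)) 1) μH[((m+1:ℕ):ℝ) - 1] := by
    refine Measure.integrableOn_of_bounded (M := 1) hfin
      ((cont_coord i).mul (cont_coord k)).aestronglyMeasurable ?_
    filter_upwards [ae_restrict_mem (sphere_measurable (m+1))] with ω hω
    have hω1 : ‖ω‖ = 1 := by simpa using hω
    have hsq := sum_sq_one hω1
    have hi2 : (ω i)^2 ≤ 1 := by
      have := Finset.single_le_sum (fun c _ => sq_nonneg (ω c)) (Finset.mem_univ i)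
      rw [hsq] at this; simpa using this
    have hk2 : (ω k)^2 ≤ 1 := by
      have := Finset.single_le_sum (fun c _ => sq_nonneg (ω c)) (Finset.mem_univ k)
      rw [hsq] at this; simpa using this
    rw [Real.norm_eq_abs]
    nlinarith [sq_abs (ω i * ω k), abs_nonneg (ω i * ω k), sq_nonneg (ω i), sq_nonneg (ω k)]
  have hIconst : IntegrableOn
      (fun _ : Euc (m+1) => 4 * Cconst (m+1) * ((m+1:ℕ):ℝ) * (((m+1:ℕ):ℝ)-2)
          * (if k = i then 1 else 0))
      (Metric.sphere (0 : Euc (m+1)) 1) μH[((m+1:ℕ):ℝ) - 1] :=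
    integrableOn_const hfin
  have hsplit : ∫ ω in Metric.sphere (0 : Euc (m+1)) 1,
      (4 * Cconst (m+1) * ((m+1:ℕ):ℝ) * (((m+1:ℕ):ℝ)-2) * (if k = i then 1 else 0)
        + 4 * Cconst (m+1) * ((m+1:ℕ):ℝ) * (((m+1:ℕ):ℝ)-2)^2 * (ω i * ω k))
        ∂μH[((m+1:ℕ):ℝ) - 1]
      = (4 * Cconst (m+1) * ((m+1:ℕ):ℝ) * (((m+1:ℕ):ℝ)-2) * (if k = i then 1 else 0))
            * (μH[((m+1:ℕ):ℝ) - 1] (Metric.sphere (0 : Euc (m+1)) 1)).toReal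
        + 4 * Cconst (m+1) * ((m+1:ℕ):ℝ) * (((m+1:ℕ):ℝ)-2)^2
            * ∫ ω in Metric.sphere (0 : Euc (m+1)) 1, ω i * ω k ∂μH[((m+1:ℕ):ℝ) - 1] := by
    rw [integral_add hIconst (hIik.const_mul _), integral_const_mul, integral_const_mul,
      setIntegral_const, smul_eq_mul, measureReal_def]
    ring
  rw [hsplit]
  by_cases hik : i = k
  · subst hik
    have hsqint : ∫ ω in Metric.sphere (0 : Euc (m+1)) 1, ω i * ω i ∂μH[((m+1:ℕ):ℝ) - 1]
        = (μH[((m+1:ℕ):ℝ) - 1] (Metric.sphere (0 : Euc (m+1)) 1)).toReal / ((m+1:ℕ):ℝ) := by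
      have h1 : ∫ ω in Metric.sphere (0 : Euc (m+1)) 1, ω i * ω i ∂μH[((m+1:ℕ):ℝ) - 1]
          = ∫ ω in Metric.sphere (0 : Euc (m+1)) 1, (ω i)^2 ∂μH[((m+1:ℕ):ℝ) - 1] := by
        refine setIntegral_congr_fun (sphere_measurable (m+1)) (fun ω _ => ?_)
        ring
      rw [h1, integral_sphere_sq _ hfin (by omega : 0 < m+1) i]
    rw [hsqint, if_pos rfl, if_pos rfl, Cconst, hsphVol]
    set N : ℝ := ((m+1:ℕ):ℝ) with hN
    set W : ℝ := (μH[((m+1:ℕ):ℝ) - 1] (Metric.sphere (0 : Euc (m+1)) 1)).toReal with hW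
    have hW0 : W ≠ 0 := hVpos.ne'
    field_simp
    ring
  · have hoff : ∫ ω in Metric.sphere (0 : Euc (m+1)) 1, ω i * ω k ∂μH[((m+1:ℕ):ℝ) - 1] = 0 :=
      integral_sphere_offdiag _ hik
    rw [hoff, if_neg (fun h => hik h.symm), if_neg hik]
    ring

end
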